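/- Suppose P : ℝ → ℝ satisfies P(z) ≥ p₀ > 0 for all z ≥ 0, and suppose 2D grid-function sequences (U^n)_{n=0}^{N+1}, (V^n)_{n=0}^{N+1} in W_h satisfy the 2D fully discrete compact scheme with zero source: for all 1 ≤ n ≤ N and interior indices (i,j), ℋδ_t⁽²⁾U_{ij}^n + P(‖V^n‖_F²)·ℋδ̄_tU_{ij}^n + ΦṼ_{ij}^n = 0 and ℋδ̄_tV_{ij}^n = Φδ̄_tU_{ij}^n. Then the discrete energy Ě^n := √(‖ℋδ_tU^{n+1}‖² + (1/2)(‖ℋV^{n+1}‖² + ‖ℋV^n‖²)) satisfies 0 ≤ Ě^n ≤ Ě^0 for all 1 ≤ n ≤ N. -/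
import Mathlib


open Finset

noncomputable section

/-- spatial mesh size `1/(2J)` -/
def msh (J : ℕ) : ℝ := 1 / (2 * (J : ℝ))

/-- 2D discrete inner product -/
def gridIP2 (J₁ J₂ : ℕ) (ω ν : ℕ → ℕ → ℝ) : ℝ :=
  msh J₁ * msh J₂ *
    ∑ i ∈ Finset.Icc 1 (2 * J₁ - 1), ∑ j ∈ Finset.Icc 1 (2 * J₂ - 1), ω i j * ν i j

/-- 2D discrete `L²` norm -/
def gridNorm2 (J₁ J₂ : ℕ) (ω : ℕ → ℕ → ℝ) : ℝ :=
  Real.sqrt (gridIP2 J₁ J₂ ω ω)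

/-- the 2D norm `‖ω‖_E` -/
def gridNormE (J₁ J₂ : ℕ) (ω : ℕ → ℕ → ℝ) : ℝ :=
  2 / 3 * Real.sqrt (msh J₁ * msh J₂ *
    ∑ i ∈ Finset.Icc 1 J₁, ∑ j ∈ Finset.Icc 1 J₂,
      (ω (2 * i - 2) (2 * j - 1) ^ 2 + ω (2 * i - 1) (2 * j - 2) ^ 2
        + 3 * ω (2 * i - 1) (2 * j - 1) ^ 2))

/-- the 2D norm `‖ω‖_F = √((4/9)‖ω‖² + ‖ω‖_E²)` -/
def gridNormF (J₁ J₂ : ℕ) (ω : ℕ → ℕ → ℝ) : ℝ :=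
  Real.sqrt (4 / 9 * gridNorm2 J₁ J₂ ω ^ 2 + gridNormE J₁ J₂ ω ^ 2)

/-- compact operator `𝒜` in the `x`-direction (interior formula) -/
def cA2 (ω : ℕ → ℕ → ℝ) (i j : ℕ) : ℝ := (ω (i + 1) j + 10 * ω i j + ω (i - 1) j) / 12

/-- compact operator `ℬ` in the `y`-direction (interior formula) -/
def cB2 (ω : ℕ → ℕ → ℝ) (i j : ℕ) : ℝ := (ω i (j + 1) + 10 * ω i j + ω i (j - 1)) / 12

/-- compact operator `ℋ = 𝒜ℬ` -/
def cH (ω : ℕ → ℕ → ℝ) : ℕ → ℕ → ℝ := cA2 (cB2 ω)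

/-- second difference `δ_xδ_x̄` -/
def dxx2 (J₁ : ℕ) (ω : ℕ → ℕ → ℝ) (i j : ℕ) : ℝ :=
  (ω (i + 1) j - 2 * ω i j + ω (i - 1) j) / msh J₁ ^ 2

/-- second difference `δ_yδ_ȳ` -/
def dyy2 (J₂ : ℕ) (ω : ℕ → ℕ → ℝ) (i j : ℕ) : ℝ :=
  (ω i (j + 1) - 2 * ω i j + ω i (j - 1)) / msh J₂ ^ 2

/-- compact discrete Laplacian `Φ = ℬδ_xδ_x̄ + 𝒜δ_yδ_ȳ` -/
def cPhi (J₁ J₂ : ℕ) (ω : ℕ → ℕ → ℝ) (i j : ℕ) : ℝ :=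
  cB2 (dxx2 J₁ ω) i j + cA2 (dyy2 J₂ ω) i j

/-- membership in `W_h`: vanishing on the boundary indices -/
def memWh (J₁ J₂ : ℕ) (ω : ℕ → ℕ → ℝ) : Prop :=
  ∀ i j : ℕ, (i = 0 ∨ i = 2 * J₁ ∨ j = 0 ∨ j = 2 * J₂) → ω i j = 0

/-- the discrete energy `Ě^n = √(‖ℋδ_t U^{n+1}‖² + (1/2)(‖ℋV^{n+1}‖² + ‖ℋV^n‖²))` -/
def energyE2 (J₁ J₂ : ℕ) (τ : ℝ) (U V : ℕ → ℕ → ℕ → ℝ) (n : ℕ) : ℝ :=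
  Real.sqrt (gridNorm2 J₁ J₂ (cH fun i j => (U (n + 1) i j - U n i j) / τ) ^ 2
    + 1 / 2 * (gridNorm2 J₁ J₂ (cH (V (n + 1))) ^ 2 + gridNorm2 J₁ J₂ (cH (V n)) ^ 2))

namespace S18

lemma sum_shift (M : ℕ) (hM : 1 ≤ M) (f g : ℕ → ℝ) (hf : f (2*M) = 0) (hg : g 0 = 0) :
    ∑ i ∈ Icc 1 (2*M-1), f (i+1) * g i = ∑ i ∈ Icc 1 (2*M-1), f i * g (i-1) := by
  have h1 : ∑ i ∈ Icc 2 (2*M), f i * g (i-1) = ∑ i ∈ Icc 1 (2*M-1), f (i+1) * g i := by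
    rw [show (2:ℕ) = 1 + 1 from rfl, show 2*M = (2*M-1) + 1 by omega,
      ← map_add_right_Icc, Finset.sum_map]
    simp [addRightEmbedding]
  rw [← h1]
  have e1 : Icc 2 (2*M) = insert (2*M) (Icc 2 (2*M-1)) := by ext x; simp; omega
  have e2 : Icc 1 (2*M-1) = insert 1 (Icc 2 (2*M-1)) := by ext x; simp; omega
  rw [e1, e2, Finset.sum_insert (by simp only [mem_Icc]; omega),
    Finset.sum_insert (by simp only [mem_Icc]; omega)]
  simp [hf, hg]

lemma sbp0 (M : ℕ) (hM : 1 ≤ M) (f g : ℕ → ℝ) (hf0 : f 0 = 0) (hfM : f (2*M) = 0)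
    (hg0 : g 0 = 0) (hgM : g (2*M) = 0) :
    ∑ i ∈ Icc 1 (2*M-1), (f (i+1) - 2*f i + f (i-1)) * g i
      = ∑ i ∈ Icc 1 (2*M-1), f i * (g (i+1) - 2*g i + g (i-1)) := by
  have A := sum_shift M hM f g hfM hg0
  have B := sum_shift M hM g f hgM hf0
  have hL : ∀ i:ℕ, (f (i+1) - 2*f i + f (i-1)) * g i
      = f (i+1) * g i - 2*(f i * g i) + f (i-1) * g i := fun i => by ring
  have hR : ∀ i:ℕ, f i * (g (i+1) - 2*g i + g (i-1))
      = g (i+1) * f i - 2*(f i * g i) + f i * g (i-1) := fun i => by ring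
  simp only [hL, hR, Finset.sum_add_distrib, Finset.sum_sub_distrib]
  have C : ∑ i ∈ Icc 1 (2*M-1), f (i-1) * g i = ∑ i ∈ Icc 1 (2*M-1), g i * f (i-1) :=
    Finset.sum_congr rfl fun i _ => mul_comm _ _
  rw [A, B, C]; ring

/-- raw (unscaled) 2D discrete inner product -/
def dS (J₁ J₂ : ℕ) (u v : ℕ → ℕ → ℝ) : ℝ :=
  ∑ i ∈ Icc 1 (2*J₁-1), ∑ j ∈ Icc 1 (2*J₂-1), u i j * v i j

lemma dS_comm (J₁ J₂ : ℕ) (u v : ℕ → ℕ → ℝ) : dS J₁ J₂ u v = dS J₁ J₂ v u :=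
  Finset.sum_congr rfl fun _ _ => Finset.sum_congr rfl fun _ _ => mul_comm _ _

lemma sbp_x (J₁ J₂ : ℕ) (hJ₁ : 1 ≤ J₁) (u v : ℕ → ℕ → ℝ)
    (hu0 : ∀ j, u 0 j = 0) (huM : ∀ j, u (2*J₁) j = 0)
    (hv0 : ∀ j, v 0 j = 0) (hvM : ∀ j, v (2*J₁) j = 0) :
    dS J₁ J₂ (dxx2 J₁ u) v = dS J₁ J₂ u (dxx2 J₁ v) := by
  unfold dS
  rw [Finset.sum_comm]
  rw [show (∑ i ∈ Icc 1 (2*J₁-1), ∑ j ∈ Icc 1 (2*J₂-1), u i j * dxx2 J₁ v i j)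
      = ∑ j ∈ Icc 1 (2*J₂-1), ∑ i ∈ Icc 1 (2*J₁-1), u i j * dxx2 J₁ v i j from Finset.sum_comm]
  refine Finset.sum_congr rfl fun j _ => ?_
  simp only [dxx2, div_mul_eq_mul_div, ← mul_div_assoc]
  rw [← Finset.sum_div, ← Finset.sum_div]
  exact congrArg (· / msh J₁^2)
    (sbp0 J₁ hJ₁ (fun i => u i j) (fun i => v i j) (hu0 j) (huM j) (hv0 j) (hvM j))

lemma sbp_y (J₁ J₂ : ℕ) (hJ₂ : 1 ≤ J₂) (u v : ℕ → ℕ → ℝ)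
    (hu0 : ∀ i, u i 0 = 0) (huM : ∀ i, u i (2*J₂) = 0)
    (hv0 : ∀ i, v i 0 = 0) (hvM : ∀ i, v i (2*J₂) = 0) :
    dS J₁ J₂ (dyy2 J₂ u) v = dS J₁ J₂ u (dyy2 J₂ v) := by
  refine Finset.sum_congr rfl fun i _ => ?_
  simp only [dyy2, div_mul_eq_mul_div, ← mul_div_assoc]
  rw [← Finset.sum_div, ← Finset.sum_div]
  exact congrArg (· / msh J₂^2)
    (sbp0 J₂ hJ₂ (fun j => u i j) (fun j => v i j) (hu0 i) (huM i) (hv0 i) (hvM i))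

lemma comm_xy (J₁ J₂ : ℕ) (ω : ℕ → ℕ → ℝ) :
    dyy2 J₂ (dxx2 J₁ ω) = dxx2 J₁ (dyy2 J₂ ω) := by
  funext i j; simp only [dxx2, dyy2]; ring

lemma dxx2_col (J₁ J₂ : ℕ) (ω : ℕ → ℕ → ℝ) (j₀ : ℕ) (h : ∀ i, ω i j₀ = 0) :
    ∀ i, dxx2 J₁ ω i j₀ = 0 := fun i => by simp [dxx2, h]

lemma dyy2_row (J₁ J₂ : ℕ) (ω : ℕ → ℕ → ℝ) (i₀ : ℕ) (h : ∀ j, ω i₀ j = 0) :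
    ∀ j, dyy2 J₂ ω i₀ j = 0 := fun j => by simp [dyy2, h]


lemma msh_pos (J : ℕ) (hJ : 0 < J) : 0 < msh J := by
  have : (0:ℝ) < (J:ℝ) := by exact_mod_cast hJ
  unfold msh; positivity

lemma cH_eq (J₁ J₂ : ℕ) (hJ₁ : 0 < J₁) (hJ₂ : 0 < J₂) (ω : ℕ → ℕ → ℝ) :
    cH ω = fun i j => ω i j + msh J₁^2/12 * dxx2 J₁ ω i j + msh J₂^2/12 * dyy2 J₂ ω i j
      + msh J₁^2/12 * (msh J₂^2/12) * dxx2 J₁ (dyy2 J₂ ω) i j := by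
  have h1 : msh J₁ ≠ 0 := (msh_pos J₁ hJ₁).ne'
  have h2 : msh J₂ ≠ 0 := (msh_pos J₂ hJ₂).ne'
  funext i j
  simp only [cH, cA2, cB2, dxx2, dyy2]
  field_simp
  ring

lemma cPhi_eq (J₁ J₂ : ℕ) (hJ₁ : 0 < J₁) (hJ₂ : 0 < J₂) (ω : ℕ → ℕ → ℝ) :
    cPhi J₁ J₂ ω = fun i j => dxx2 J₁ ω i j + dyy2 J₂ ω i j
      + (msh J₁^2/12 + msh J₂^2/12) * dxx2 J₁ (dyy2 J₂ ω) i j := by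
  have h1 : msh J₁ ≠ 0 := (msh_pos J₁ hJ₁).ne'
  have h2 : msh J₂ ≠ 0 := (msh_pos J₂ hJ₂).ne'
  funext i j
  simp only [cPhi, cA2, cB2, dxx2, dyy2]
  field_simp
  ring

lemma dS_expand (J₁ J₂ : ℕ) (γ α β : ℝ) (u1 u2 u3 v0 v1 v2 v3 : ℕ → ℕ → ℝ) :
    dS J₁ J₂ (fun i j => u1 i j + u2 i j + γ * u3 i j)
      (fun i j => v0 i j + α * v1 i j + β * v2 i j + α * β * v3 i j)
    = (dS J₁ J₂ u1 v0 + dS J₁ J₂ u2 v0 + γ * dS J₁ J₂ u3 v0)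
      + α * (dS J₁ J₂ u1 v1 + dS J₁ J₂ u2 v1 + γ * dS J₁ J₂ u3 v1)
      + β * (dS J₁ J₂ u1 v2 + dS J₁ J₂ u2 v2 + γ * dS J₁ J₂ u3 v2)
      + α * β * (dS J₁ J₂ u1 v3 + dS J₁ J₂ u2 v3 + γ * dS J₁ J₂ u3 v3) := by
  unfold dS
  simp only [Finset.mul_sum, ← Finset.sum_add_distrib]
  exact Finset.sum_congr rfl fun i _ => Finset.sum_congr rfl fun j _ => by ring

lemma phiH_symm (J₁ J₂ : ℕ) (hJ₁ : 0 < J₁) (hJ₂ : 0 < J₂) (p q : ℕ → ℕ → ℝ)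
    (hp : memWh J₁ J₂ p) (hq : memWh J₁ J₂ q) :
    dS J₁ J₂ (cPhi J₁ J₂ p) (cH q) = dS J₁ J₂ (cH p) (cPhi J₁ J₂ q) := by
  set α := msh J₁^2/12 with hα
  set β := msh J₂^2/12 with hβ
  -- boundary facts
  have hpx0 : ∀ j, p 0 j = 0 := fun j => hp 0 j (Or.inl rfl)
  have hpxM : ∀ j, p (2*J₁) j = 0 := fun j => hp _ j (Or.inr (Or.inl rfl))
  have hpy0 : ∀ i, p i 0 = 0 := fun i => hp i 0 (Or.inr (Or.inr (Or.inl rfl)))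
  have hpyM : ∀ i, p i (2*J₂) = 0 := fun i => hp i _ (Or.inr (Or.inr (Or.inr rfl)))
  have hqx0 : ∀ j, q 0 j = 0 := fun j => hq 0 j (Or.inl rfl)
  have hqxM : ∀ j, q (2*J₁) j = 0 := fun j => hq _ j (Or.inr (Or.inl rfl))
  have hqy0 : ∀ i, q i 0 = 0 := fun i => hq i 0 (Or.inr (Or.inr (Or.inl rfl)))
  have hqyM : ∀ i, q i (2*J₂) = 0 := fun i => hq i _ (Or.inr (Or.inr (Or.inr rfl)))
  have hDxp0 : ∀ i, dxx2 J₁ p i 0 = 0 := dxx2_col J₁ J₂ p 0 hpy0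
  have hDxpM : ∀ i, dxx2 J₁ p i (2*J₂) = 0 := dxx2_col J₁ J₂ p _ hpyM
  have hDxq0 : ∀ i, dxx2 J₁ q i 0 = 0 := dxx2_col J₁ J₂ q 0 hqy0
  have hDxqM : ∀ i, dxx2 J₁ q i (2*J₂) = 0 := dxx2_col J₁ J₂ q _ hqyM
  have hDyp0 : ∀ j, dyy2 J₂ p 0 j = 0 := dyy2_row J₁ J₂ p 0 hpx0
  have hDypM : ∀ j, dyy2 J₂ p (2*J₁) j = 0 := dyy2_row J₁ J₂ p _ hpxM
  have hDyq0 : ∀ j, dyy2 J₂ q 0 j = 0 := dyy2_row J₁ J₂ q 0 hqx0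
  have hDyqM : ∀ j, dyy2 J₂ q (2*J₁) j = 0 := dyy2_row J₁ J₂ q _ hqxM
  -- key exchange identities
  have S1 : dS J₁ J₂ (dxx2 J₁ p) q = dS J₁ J₂ p (dxx2 J₁ q) :=
    sbp_x J₁ J₂ hJ₁ p q hpx0 hpxM hqx0 hqxM
  have S2 : dS J₁ J₂ (dyy2 J₂ p) q = dS J₁ J₂ p (dyy2 J₂ q) :=
    sbp_y J₁ J₂ hJ₂ p q hpy0 hpyM hqy0 hqyM
  have M1 : dS J₁ J₂ (dxx2 J₁ (dyy2 J₂ p)) q = dS J₁ J₂ p (dxx2 J₁ (dyy2 J₂ q)) := by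
    calc dS J₁ J₂ (dxx2 J₁ (dyy2 J₂ p)) q
        = dS J₁ J₂ (dyy2 J₂ p) (dxx2 J₁ q) :=
          sbp_x J₁ J₂ hJ₁ (dyy2 J₂ p) q hDyp0 hDypM hqx0 hqxM
      _ = dS J₁ J₂ p (dyy2 J₂ (dxx2 J₁ q)) :=
          sbp_y J₁ J₂ hJ₂ p (dxx2 J₁ q) hpy0 hpyM hDxq0 hDxqM
      _ = dS J₁ J₂ p (dxx2 J₁ (dyy2 J₂ q)) := by rw [comm_xy]
  have M2 : dS J₁ J₂ (dxx2 J₁ p) (dyy2 J₂ q) = dS J₁ J₂ (dyy2 J₂ p) (dxx2 J₁ q) := by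
    calc dS J₁ J₂ (dxx2 J₁ p) (dyy2 J₂ q)
        = dS J₁ J₂ (dyy2 J₂ (dxx2 J₁ p)) q :=
          (sbp_y J₁ J₂ hJ₂ (dxx2 J₁ p) q hDxp0 hDxpM hqy0 hqyM).symm
      _ = dS J₁ J₂ (dxx2 J₁ (dyy2 J₂ p)) q := by rw [comm_xy]
      _ = dS J₁ J₂ (dyy2 J₂ p) (dxx2 J₁ q) :=
          sbp_x J₁ J₂ hJ₁ (dyy2 J₂ p) q hDyp0 hDypM hqx0 hqxM
  have M3 : dS J₁ J₂ (dxx2 J₁ (dyy2 J₂ p)) (dxx2 J₁ q)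
      = dS J₁ J₂ (dxx2 J₁ p) (dxx2 J₁ (dyy2 J₂ q)) := by
    calc dS J₁ J₂ (dxx2 J₁ (dyy2 J₂ p)) (dxx2 J₁ q)
        = dS J₁ J₂ (dyy2 J₂ (dxx2 J₁ p)) (dxx2 J₁ q) := by rw [comm_xy]
      _ = dS J₁ J₂ (dxx2 J₁ p) (dyy2 J₂ (dxx2 J₁ q)) :=
          sbp_y J₁ J₂ hJ₂ (dxx2 J₁ p) (dxx2 J₁ q) hDxp0 hDxpM hDxq0 hDxqM
      _ = dS J₁ J₂ (dxx2 J₁ p) (dxx2 J₁ (dyy2 J₂ q)) := by rw [comm_xy]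
  have M4 : dS J₁ J₂ (dxx2 J₁ (dyy2 J₂ p)) (dyy2 J₂ q)
      = dS J₁ J₂ (dyy2 J₂ p) (dxx2 J₁ (dyy2 J₂ q)) :=
    sbp_x J₁ J₂ hJ₁ (dyy2 J₂ p) (dyy2 J₂ q) hDyp0 hDypM hDyq0 hDyqM
  -- expand both sides
  rw [show dS J₁ J₂ (cH p) (cPhi J₁ J₂ q) = dS J₁ J₂ (cPhi J₁ J₂ q) (cH p) from
    dS_comm _ _ _ _]
  rw [cPhi_eq J₁ J₂ hJ₁ hJ₂ p, cH_eq J₁ J₂ hJ₁ hJ₂ q,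
    cPhi_eq J₁ J₂ hJ₁ hJ₂ q, cH_eq J₁ J₂ hJ₁ hJ₂ p, ← hα, ← hβ]
  rw [dS_expand J₁ J₂ (α+β) α β (dxx2 J₁ p) (dyy2 J₂ p) (dxx2 J₁ (dyy2 J₂ p))
    q (dxx2 J₁ q) (dyy2 J₂ q) (dxx2 J₁ (dyy2 J₂ q))]
  rw [dS_expand J₁ J₂ (α+β) α β (dxx2 J₁ q) (dyy2 J₂ q) (dxx2 J₁ (dyy2 J₂ q))
    p (dxx2 J₁ p) (dyy2 J₂ p) (dxx2 J₁ (dyy2 J₂ p))]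
  have h1 : dS J₁ J₂ (dxx2 J₁ p) q = dS J₁ J₂ (dxx2 J₁ q) p := by
    rw [S1, dS_comm]
  have h2 : dS J₁ J₂ (dyy2 J₂ p) q = dS J₁ J₂ (dyy2 J₂ q) p := by
    rw [S2, dS_comm]
  have h3 : dS J₁ J₂ (dxx2 J₁ (dyy2 J₂ p)) q = dS J₁ J₂ (dxx2 J₁ (dyy2 J₂ q)) p := by
    rw [M1, dS_comm]
  have h4 : dS J₁ J₂ (dxx2 J₁ p) (dxx2 J₁ q) = dS J₁ J₂ (dxx2 J₁ q) (dxx2 J₁ p) :=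
    dS_comm _ _ _ _
  have h5 : dS J₁ J₂ (dyy2 J₂ p) (dxx2 J₁ q) = dS J₁ J₂ (dyy2 J₂ q) (dxx2 J₁ p) := by
    rw [← M2, dS_comm]
  have h6 : dS J₁ J₂ (dxx2 J₁ (dyy2 J₂ p)) (dxx2 J₁ q)
      = dS J₁ J₂ (dxx2 J₁ (dyy2 J₂ q)) (dxx2 J₁ p) := by
    rw [M3, dS_comm]
  have h7 : dS J₁ J₂ (dxx2 J₁ p) (dyy2 J₂ q) = dS J₁ J₂ (dxx2 J₁ q) (dyy2 J₂ p) := by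
    rw [M2, dS_comm]
  have h8 : dS J₁ J₂ (dyy2 J₂ p) (dyy2 J₂ q) = dS J₁ J₂ (dyy2 J₂ q) (dyy2 J₂ p) :=
    dS_comm _ _ _ _
  have h9 : dS J₁ J₂ (dxx2 J₁ (dyy2 J₂ p)) (dyy2 J₂ q)
      = dS J₁ J₂ (dxx2 J₁ (dyy2 J₂ q)) (dyy2 J₂ p) := by
    rw [M4, dS_comm]
  have h10 : dS J₁ J₂ (dxx2 J₁ p) (dxx2 J₁ (dyy2 J₂ q))
      = dS J₁ J₂ (dxx2 J₁ q) (dxx2 J₁ (dyy2 J₂ p)) := by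
    rw [← M3, dS_comm]
  have h11 : dS J₁ J₂ (dyy2 J₂ p) (dxx2 J₁ (dyy2 J₂ q))
      = dS J₁ J₂ (dyy2 J₂ q) (dxx2 J₁ (dyy2 J₂ p)) := by
    rw [← M4, dS_comm]
  have h12 : dS J₁ J₂ (dxx2 J₁ (dyy2 J₂ p)) (dxx2 J₁ (dyy2 J₂ q))
      = dS J₁ J₂ (dxx2 J₁ (dyy2 J₂ q)) (dxx2 J₁ (dyy2 J₂ p)) := dS_comm _ _ _ _
  linear_combination h1 + h2 + (α+β)*h3 + α*(h4 + h5 + (α+β)*h6)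
    + β*(h7 + h8 + (α+β)*h9) + α*β*(h10 + h11 + (α+β)*h12)

end S18

namespace S18

lemma gridIP2_dS (J₁ J₂ : ℕ) (ω ν : ℕ → ℕ → ℝ) :
    gridIP2 J₁ J₂ ω ν = msh J₁ * msh J₂ * dS J₁ J₂ ω ν := rfl

lemma dS_self_nonneg (J₁ J₂ : ℕ) (ω : ℕ → ℕ → ℝ) : 0 ≤ dS J₁ J₂ ω ω :=
  Finset.sum_nonneg fun i _ => Finset.sum_nonneg fun j _ => mul_self_nonneg _

lemma msh_nonneg (J : ℕ) : 0 ≤ msh J := by unfold msh; positivity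

lemma gridIP2_self_nonneg (J₁ J₂ : ℕ) (ω : ℕ → ℕ → ℝ) : 0 ≤ gridIP2 J₁ J₂ ω ω := by
  rw [gridIP2_dS]
  exact mul_nonneg (mul_nonneg (msh_nonneg _) (msh_nonneg _)) (dS_self_nonneg _ _ _)

lemma normsq (J₁ J₂ : ℕ) (ω : ℕ → ℕ → ℝ) :
    gridNorm2 J₁ J₂ ω ^ 2 = gridIP2 J₁ J₂ ω ω :=
  Real.sq_sqrt (gridIP2_self_nonneg _ _ _)

/-- the square of the discrete energy, written with raw sums -/
def rawE (J₁ J₂ : ℕ) (τ : ℝ) (U V : ℕ → ℕ → ℕ → ℝ) (n : ℕ) : ℝ :=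
  msh J₁ * msh J₂ *
    (dS J₁ J₂ (cH fun i j => (U (n + 1) i j - U n i j) / τ)
        (cH fun i j => (U (n + 1) i j - U n i j) / τ)
      + 1 / 2 * (dS J₁ J₂ (cH (V (n + 1))) (cH (V (n + 1)))
        + dS J₁ J₂ (cH (V n)) (cH (V n))))

lemma energy_sqrt (J₁ J₂ : ℕ) (τ : ℝ) (U V : ℕ → ℕ → ℕ → ℝ) (n : ℕ) :
    energyE2 J₁ J₂ τ U V n = Real.sqrt (rawE J₁ J₂ τ U V n) := by
  unfold energyE2 rawE
  rw [normsq, normsq, normsq, gridIP2_dS, gridIP2_dS, gridIP2_dS]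
  congr 1; ring

end S18

set_option maxHeartbeats 2000000 in
/-- energy dissipation of the 2D fully discrete compact scheme
(Corollary 4.1). -/
theorem stmt_18 (J₁ J₂ N : ℕ) (hJ₁ : 0 < J₁) (hJ₂ : 0 < J₂) (hN : 0 < N)
    (τ : ℝ) (hτ : 0 < τ)
    (p₀ : ℝ) (hp₀ : 0 < p₀) (P : ℝ → ℝ) (hP : ∀ z : ℝ, 0 ≤ z → p₀ ≤ P z)
    (U V : ℕ → ℕ → ℕ → ℝ)
    (hUbc : ∀ n, memWh J₁ J₂ (U n)) (hVbc : ∀ n, memWh J₁ J₂ (V n))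
    (hs1 : ∀ n ∈ Finset.Icc 1 N, ∀ i ∈ Finset.Icc 1 (2 * J₁ - 1),
      ∀ j ∈ Finset.Icc 1 (2 * J₂ - 1),
      cH (fun a b => (U (n + 1) a b - 2 * U n a b + U (n - 1) a b) / τ ^ 2) i j
          + P (gridNormF J₁ J₂ (V n) ^ 2)
              * cH (fun a b => (U (n + 1) a b - U (n - 1) a b) / (2 * τ)) i j
          + cPhi J₁ J₂ (fun a b => (V (n + 1) a b + V (n - 1) a b) / 2) i j
        = 0)
    (hs2 : ∀ n ∈ Finset.Icc 1 N, ∀ i ∈ Finset.Icc 1 (2 * J₁ - 1),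
      ∀ j ∈ Finset.Icc 1 (2 * J₂ - 1),
      cH (fun a b => (V (n + 1) a b - V (n - 1) a b) / (2 * τ)) i j
        = cPhi J₁ J₂ (fun a b => (U (n + 1) a b - U (n - 1) a b) / (2 * τ)) i j) :
    ∀ n ∈ Finset.Icc 1 N,
      0 ≤ energyE2 J₁ J₂ τ U V n ∧ energyE2 J₁ J₂ τ U V n ≤ energyE2 J₁ J₂ τ U V 0 := by

  classical
  have hτ' : τ ≠ 0 := hτ.ne'
  -- the dissipation step
  have step : ∀ n ∈ Finset.Icc 1 N,
      S18.rawE J₁ J₂ τ U V n ≤ S18.rawE J₁ J₂ τ U V (n - 1) := by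
    intro n hn
    obtain ⟨hn1, hn2⟩ := Finset.mem_Icc.mp hn
    have hsub : n - 1 + 1 = n := by omega
    set Pn := P (gridNormF J₁ J₂ (V n) ^ 2) with hPn
    -- abbreviations for the grid functions appearing in the scheme
    set A := cH (fun a b => (U (n + 1) a b - 2 * U n a b + U (n - 1) a b) / τ ^ 2) with hA
    set B := cH (fun a b => (U (n + 1) a b - U (n - 1) a b) / (2 * τ)) with hB
    set C := cPhi J₁ J₂ (fun a b => (V (n + 1) a b + V (n - 1) a b) / 2) with hC
    set x := cH (fun i j => (U (n + 1) i j - U n i j) / τ) with hx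
    set y := cH (fun i j => (U n i j - U (n - 1) i j) / τ) with hy
    set vp := cH (V (n + 1)) with hvp
    set vm := cH (V (n - 1)) with hvm
    set vc := cH (V n) with hvc
    clear_value Pn A B C x y vp vm vc
    -- the tested scheme
    have h0 : S18.dS J₁ J₂ A B + Pn * S18.dS J₁ J₂ B B + S18.dS J₁ J₂ C B = 0 := by
      have h0' : ∑ i ∈ Finset.Icc 1 (2 * J₁ - 1), ∑ j ∈ Finset.Icc 1 (2 * J₂ - 1),
          (A i j + Pn * B i j + C i j) * B i j = 0 :=
        Finset.sum_eq_zero fun i hi => Finset.sum_eq_zero fun j hj => by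
          rw [hA, hB, hC, hPn, hs1 n hn i hi j hj, zero_mul]
      rw [← h0']
      unfold S18.dS
      simp only [Finset.mul_sum, ← Finset.sum_add_distrib]
      exact Finset.sum_congr rfl fun i _ => Finset.sum_congr rfl fun j _ => by ring
    -- kinetic term
    have hKA : 2 * τ * S18.dS J₁ J₂ A B = S18.dS J₁ J₂ x x - S18.dS J₁ J₂ y y := by
      unfold S18.dS
      simp only [Finset.mul_sum, ← Finset.sum_sub_distrib]
      refine Finset.sum_congr rfl fun i _ => Finset.sum_congr rfl fun j _ => ?_
      rw [hA, hB, hx, hy]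
      simp only [cH, cA2, cB2]
      field_simp
      ring
    -- potential term
    have hmemp : memWh J₁ J₂ (fun a b => (V (n + 1) a b + V (n - 1) a b) / 2) := by
      intro i j h; simp [hVbc (n + 1) i j h, hVbc (n - 1) i j h]
    have hmemq : memWh J₁ J₂ (fun a b => (U (n + 1) a b - U (n - 1) a b) / (2 * τ)) := by
      intro i j h; simp [hUbc (n + 1) i j h, hUbc (n - 1) i j h]
    have hKC : 4 * τ * S18.dS J₁ J₂ C B
        = S18.dS J₁ J₂ vp vp - S18.dS J₁ J₂ vm vm := by
      rw [hC, hB]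
      rw [S18.phiH_symm J₁ J₂ hJ₁ hJ₂ _ _ hmemp hmemq]
      have hstep2 : S18.dS J₁ J₂ (cH (fun a b => (V (n + 1) a b + V (n - 1) a b) / 2))
            (cPhi J₁ J₂ (fun a b => (U (n + 1) a b - U (n - 1) a b) / (2 * τ)))
          = S18.dS J₁ J₂ (cH (fun a b => (V (n + 1) a b + V (n - 1) a b) / 2))
            (cH (fun a b => (V (n + 1) a b - V (n - 1) a b) / (2 * τ))) := by
        unfold S18.dS
        refine Finset.sum_congr rfl fun i hi => Finset.sum_congr rfl fun j hj => ?_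
        rw [← hs2 n hn i hi j hj]
      rw [hstep2]
      unfold S18.dS
      simp only [Finset.mul_sum, ← Finset.sum_sub_distrib]
      refine Finset.sum_congr rfl fun i _ => Finset.sum_congr rfl fun j _ => ?_
      rw [hvp, hvm]
      simp only [cH, cA2, cB2]
      field_simp
      ring
    -- nonnegativity facts
    have hBB : 0 ≤ S18.dS J₁ J₂ B B := S18.dS_self_nonneg _ _ _
    have hPn0 : 0 ≤ Pn := by
      rw [hPn]; exact le_trans hp₀.le (hP _ (sq_nonneg _))
    -- scalar arithmetic, done abstractly
    have gen : ∀ sab sbb scb sxx syy svp svm svc : ℝ,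
        sab + Pn * sbb + scb = 0 → 2 * τ * sab = sxx - syy →
        4 * τ * scb = svp - svm → 0 ≤ sbb →
        sxx + 1/2 * (svp + svc) ≤ syy + 1/2 * (svc + svm) := by
      intro sab sbb scb sxx syy svp svm svc h1 h2 h3 h4
      have key : 2*(sxx - syy) + (svp - svm) = -(4*τ*(Pn*sbb)) := by
        linear_combination (4*τ)*h1 - 2*h2 - h3
      have hnn : 0 ≤ 4*τ*(Pn*sbb) :=
        mul_nonneg (by linarith : (0:ℝ) ≤ 4*τ) (mul_nonneg hPn0 h4)
      linarith
    have hfin : S18.dS J₁ J₂ x x + 1/2 * (S18.dS J₁ J₂ vp vp + S18.dS J₁ J₂ vc vc)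
        ≤ S18.dS J₁ J₂ y y + 1/2 * (S18.dS J₁ J₂ vc vc + S18.dS J₁ J₂ vm vm) :=
      gen _ _ _ _ _ _ _ _ h0 hKA hKC hBB
    have hrn : S18.rawE J₁ J₂ τ U V (n - 1)
        = msh J₁ * msh J₂ * (S18.dS J₁ J₂ y y
          + 1/2 * (S18.dS J₁ J₂ vc vc + S18.dS J₁ J₂ vm vm)) := by
      unfold S18.rawE
      rw [hsub, hy, hvc, hvm]
    have hrnn : S18.rawE J₁ J₂ τ U V n
        = msh J₁ * msh J₂ * (S18.dS J₁ J₂ x x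
          + 1/2 * (S18.dS J₁ J₂ vp vp + S18.dS J₁ J₂ vc vc)) := by
      unfold S18.rawE
      rw [hx, hvp, hvc]
    rw [hrn, hrnn]
    exact mul_le_mul_of_nonneg_left hfin
      (mul_nonneg (S18.msh_nonneg _) (S18.msh_nonneg _))
  -- chain the steps
  have chain : ∀ n, n ≤ N → S18.rawE J₁ J₂ τ U V n ≤ S18.rawE J₁ J₂ τ U V 0 := by
    intro n
    induction n with
    | zero => intro _; exact le_refl _
    | succ m ih =>
      intro hm
      have h1 := step (m + 1) (Finset.mem_Icc.mpr ⟨by omega, hm⟩)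
      simp only [Nat.add_sub_cancel] at h1
      exact le_trans h1 (ih (by omega))
  intro n hn
  refine ⟨?_, ?_⟩
  · rw [S18.energy_sqrt]; exact Real.sqrt_nonneg _
  · rw [S18.energy_sqrt, S18.energy_sqrt]
    exact Real.sqrt_le_sqrt (chain n (Finset.mem_Icc.mp hn).2)
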